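/- Let G = (V,E) be a finite acyclic directed graph with V = {1,…,n} and let s,t ∈ V. Using state variables x₁,…,xₙ and r, let φ₁ = ◇ⁿ⊤ ∧ □ⁿ⁺¹⊥ (n-fold ◇ applied to ⊤, and (n+1)-fold □ applied to ⊥) and φ₂ = ↓r.@_r◇↓x₁.⋯@_r◇↓xₙ.( ⋀_{(i,j)∈E} @_{x_i}◇x_j ∧ @_{x_t}◇x_s ). Then φ₁ ∧ φ₂ is satisfiable over the class of transitive frames if and only if there exists a topological ordering of (V,E) in which t appears before s. -/

import Mathlib

/-- Hybrid logic formulas over countable sets of atomic propositions,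
nominals and state variables (each indexed by `ℕ`). -/
inductive HForm : Type where
  | prop : ℕ → HForm
  | nom  : ℕ → HForm
  | svar : ℕ → HForm
  | top  : HForm
  | bot  : HForm
  | neg  : HForm → HForm
  | and  : HForm → HForm → HForm
  | or   : HForm → HForm → HForm
  | dia  : HForm → HForm
  | box  : HForm → HForm
  | bind : ℕ → HForm → HForm
  | atN  : ℕ → HForm → HForm
  | atV  : ℕ → HForm → HForm
deriving DecidableEq

/-- A (hybrid) Kripke structure: states, transition relation, labeling of
propositions by sets of states and of nominals by (single) states. -/
structure Kripke (W : Type) where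
  rel : W → W → Prop
  vProp : ℕ → Set W
  vNom : ℕ → W

/-- Update of an assignment: `updAsg g x w` is the `x`-variant of `g` mapping `x` to `w`. -/
def updAsg {W : Type} (g : ℕ → W) (x : ℕ) (w : W) : ℕ → W :=
  fun y => if y = x then w else g y

/-- The satisfaction relation `K, g, w ⊨ φ`. -/
def Sat {W : Type} (K : Kripke W) : (ℕ → W) → W → HForm → Prop
  | _, w, .prop p => w ∈ K.vProp p
  | _, w, .nom i => w = K.vNom i
  | g, w, .svar x => w = g x
  | _, _, .top => True
  | _, _, .bot => False
  | g, w, .neg φ => ¬ Sat K g w φ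
  | g, w, .and φ ψ => Sat K g w φ ∧ Sat K g w ψ
  | g, w, .or φ ψ => Sat K g w φ ∨ Sat K g w ψ
  | g, w, .dia φ => ∃ v, K.rel w v ∧ Sat K g v φ
  | g, w, .box φ => ∀ v, K.rel w v → Sat K g v φ
  | g, w, .bind x φ => Sat K (updAsg g x w) w φ
  | g, _, .atN i φ => Sat K g (K.vNom i) φ
  | g, _, .atV x φ => Sat K g (g x) φ

/-- Satisfiability over the class of all frames. -/
def SatisfiableAll (φ : HForm) : Prop :=
  ∃ (W : Type) (K : Kripke W) (g : ℕ → W) (w : W), Sat K g w φ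

/-- Satisfiability over the class of transitive frames. -/
def SatisfiableTrans (φ : HForm) : Prop :=
  ∃ (W : Type) (K : Kripke W), Transitive K.rel ∧ ∃ (g : ℕ → W) (w : W), Sat K g w φ

/-- Satisfiability over the class of total frames. -/
def SatisfiableTotal (φ : HForm) : Prop :=
  ∃ (W : Type) (K : Kripke W), (∀ w, ∃ v, K.rel w v) ∧ ∃ (g : ℕ → W) (w : W), Sat K g w φ

/-- Satisfiability over the class of ER frames. -/
def SatisfiableER (φ : HForm) : Prop :=
  ∃ (W : Type) (K : Kripke W), Equivalence K.rel ∧ ∃ (g : ℕ → W) (w : W), Sat K g w φ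

/-- The singleton reflexive Kripke structure `K₁` labeling every proposition and
nominal with its unique state. -/
def K1 : Kripke Unit := ⟨fun _ _ => True, fun _ => Set.univ, fun _ => ()⟩

/-- The assignment `g₁` mapping every state variable to the unique state of `K₁`. -/
def g1 : ℕ → Unit := fun _ => ()

/-- Unary operators of hybrid logic: `◇`, `□`, `↓x.`, `@_i` (nominal), `@_x` (state variable). -/
inductive HOp : Type where
  | dia : HOp
  | box : HOp
  | bind : ℕ → HOp
  | atN : ℕ → HOp
  | atV : ℕ → HOp
deriving DecidableEq

def applyOp : HOp → HForm → HForm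
  | .dia, φ => .dia φ
  | .box, φ => .box φ
  | .bind x, φ => .bind x φ
  | .atN i, φ => .atN i φ
  | .atV x, φ => .atV x φ

/-- Apply a sequence of operators to a formula (head of the list outermost). -/
def applyOps : List HOp → HForm → HForm
  | [], φ => φ
  | o :: os, φ => applyOp o (applyOps os φ)

section Aux

variable {W : Type}

/-- A reflexive point below `w` contradicts `□^[k+1]⊥`. -/
lemma aux_box_irrefl (K : Kripke W) :
    ∀ (k : ℕ) (g : ℕ → W) (w u : W),
      Sat K g w (HForm.box^[k + 1] HForm.bot) → K.rel w u → K.rel u u → False := by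
  intro k
  induction k with
  | zero =>
    intro g w u h hwu _
    exact h u hwu
  | succ k ih =>
    intro g w u h hwu huu
    rw [Function.iterate_succ_apply'] at h
    exact ih g u u (h u hwu) huu huu

lemma aux_foldr_iff (K : Kripke W) {n : ℕ} (base : HForm) :
    ∀ (Es : List (Fin n × Fin n)) (g : ℕ → W) (w : W),
      Sat K g w (Es.foldr
        (fun e acc => HForm.and (HForm.atV (e.1 : ℕ) (HForm.dia (HForm.svar (e.2 : ℕ)))) acc)
        base) ↔
      (∀ e ∈ Es, K.rel (g (e.1 : ℕ)) (g (e.2 : ℕ))) ∧ Sat K g w base := by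
  intro Es
  induction Es with
  | nil => intro g w; simp
  | cons e Es ih =>
    intro g w
    simp only [List.foldr_cons, List.mem_cons]
    constructor
    · rintro ⟨h1, h2⟩
      obtain ⟨hE, hb⟩ := (ih g w).1 h2
      refine ⟨?_, hb⟩
      rintro e' (rfl | he')
      · obtain ⟨v, hv, rfl⟩ := h1
        exact hv
      · exact hE e' he'
    · rintro ⟨hE, hb⟩
      refine ⟨⟨g (e.2 : ℕ), hE e (Or.inl rfl), rfl⟩, (ih g w).2 ⟨fun e' he' => hE e' (Or.inr he'), hb⟩⟩

lemma aux_extract (K : Kripke W) {n : ℕ} (w : W) (ψ : HForm) :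
    ∀ (L : List (Fin n)) (g : ℕ → W) (w' : W),
      Sat K g w' (applyOps (L.flatMap fun i => [HOp.atV n, HOp.dia, HOp.bind i.val]) ψ) →
      g n = w →
      ∃ g' : ℕ → W, (∀ i ∈ L, K.rel w (g' (i : ℕ))) ∧
        (∀ y, (∀ i ∈ L, (i : ℕ) ≠ y) → g' y = g y) ∧ ∃ w'', Sat K g' w'' ψ := by
  intro L
  induction L with
  | nil =>
    intro g w' h _
    exact ⟨g, by simp, fun y _ => rfl, w', h⟩
  | cons i L ih =>
    intro g w' h hgn
    have h' : Sat K g w' (HForm.atV n (HForm.dia (HForm.bind (i : ℕ)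
        (applyOps (L.flatMap fun i => [HOp.atV n, HOp.dia, HOp.bind i.val]) ψ)))) := h
    simp only [Sat, hgn] at h'
    obtain ⟨v, hwv, hrest⟩ := h'
    have hiv : (i : ℕ) ≠ n := Nat.ne_of_lt i.isLt
    have hupd : updAsg g (i : ℕ) v n = w := by
      simp [updAsg, Ne.symm hiv, hgn]
    obtain ⟨g', hrel, hkeep, w'', hsat⟩ := ih (updAsg g (i : ℕ) v) v hrest hupd
    refine ⟨g', ?_, ?_, w'', hsat⟩
    · intro j hjmem
      rcases List.mem_cons.1 hjmem with rfl | hj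
      · by_cases hjL : j ∈ L
        · exact hrel j hjL
        · have : g' (j : ℕ) = updAsg g (j : ℕ) v (j : ℕ) := by
            refine hkeep _ ?_
            intro k hk hkj
            exact hjL (by rwa [show k = j from Fin.ext hkj] at hk)
          rw [this]
          simpa [updAsg] using hwv
      · exact hrel j hj
    · intro y hy
      have h1 : g' y = updAsg g (i : ℕ) v y :=
        hkeep y (fun k hk => hy k (List.mem_cons_of_mem _ hk))
      rw [h1]
      have : (i : ℕ) ≠ y := hy i (List.mem_cons_self)
      simp [updAsg, Ne.symm this]

lemma aux_build (K : Kripke W) {n : ℕ} (w : W) (f : Fin n → W)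
    (hf : ∀ i, K.rel w (f i)) (ψ : HForm) :
    ∀ (L : List (Fin n)) (g : ℕ → W) (w' : W), g n = w →
      (∀ w'', Sat K (L.foldl (fun g j => updAsg g j.val (f j)) g) w'' ψ) →
      Sat K g w' (applyOps (L.flatMap fun i => [HOp.atV n, HOp.dia, HOp.bind i.val]) ψ) := by
  intro L
  induction L with
  | nil =>
    intro g w' _ h
    exact h w'
  | cons i L ih =>
    intro g w' hgn h
    show Sat K g w' (HForm.atV n (HForm.dia (HForm.bind (i : ℕ)
        (applyOps (L.flatMap fun i => [HOp.atV n, HOp.dia, HOp.bind i.val]) ψ))))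
    simp only [Sat, hgn]
    refine ⟨f i, hf i, ?_⟩
    have hiv : (i : ℕ) ≠ n := Nat.ne_of_lt i.isLt
    exact ih (updAsg g (i : ℕ) (f i)) (f i) (by simp [updAsg, Ne.symm hiv, hgn]) h

lemma aux_foldl_ne {n : ℕ} (f : Fin n → W) :
    ∀ (L : List (Fin n)) (g : ℕ → W) (y : ℕ), (∀ i ∈ L, (i : ℕ) ≠ y) →
      (L.foldl (fun g j => updAsg g j.val (f j)) g) y = g y := by
  intro L
  induction L with
  | nil => intro g y _; rfl
  | cons i L ih =>
    intro g y hy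
    simp only [List.foldl_cons]
    rw [ih _ y (fun k hk => hy k (List.mem_cons_of_mem _ hk))]
    simp [updAsg, Ne.symm (hy i (List.mem_cons_self))]

lemma aux_foldl_mem {n : ℕ} (f : Fin n → W) :
    ∀ (L : List (Fin n)) (g : ℕ → W) (y : Fin n), y ∈ L →
      (L.foldl (fun g j => updAsg g j.val (f j)) g) (y : ℕ) = f y := by
  intro L
  induction L with
  | nil => intro g y hy; simp at hy
  | cons i L ih =>
    intro g y hy
    simp only [List.foldl_cons]
    by_cases hyL : y ∈ L
    · exact ih _ y hyL
    · have : y = i := by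
        rcases List.mem_cons.1 hy with h | h
        · exact h
        · exact absurd h hyL
      subst this
      rw [aux_foldl_ne f L _ (y : ℕ)
        (fun k hk hky => hyL (by rwa [show k = y from Fin.ext hky] at hk))]
      simp [updAsg]

/-- chain model: `Fin (n+1)` with `<` satisfies `◇^[k]⊤` at points with room. -/
lemma aux_dia_iter {n : ℕ} (K : Kripke (Fin (n + 1))) (hK : K.rel = (· < ·)) :
    ∀ (k : ℕ) (g : ℕ → Fin (n + 1)) (w : Fin (n + 1)), (w : ℕ) + k ≤ n →
      Sat K g w (HForm.dia^[k] HForm.top) := by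
  intro k
  induction k with
  | zero => intro g w _; trivial
  | succ k ih =>
    intro g w hw
    rw [Function.iterate_succ_apply']
    refine ⟨⟨(w : ℕ) + 1, by omega⟩, ?_, ih g _ (by simp; omega)⟩
    rw [hK]
    exact Fin.mk_lt_of_lt_val (by simp)

lemma aux_box_iter {n : ℕ} (K : Kripke (Fin (n + 1))) (hK : K.rel = (· < ·)) :
    ∀ (k : ℕ) (g : ℕ → Fin (n + 1)) (w : Fin (n + 1)), n < (w : ℕ) + k →
      Sat K g w (HForm.box^[k] HForm.bot) := by
  intro k
  induction k with
  | zero =>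
    intro g w hw
    exact absurd (w.isLt) (by omega)
  | succ k ih =>
    intro g w hw
    rw [Function.iterate_succ_apply']
    intro v hv
    rw [hK] at hv
    exact ih g v (by have := Fin.lt_iff_val_lt_val.1 hv; omega)

/-- A strict order on `Fin n` linearizes to a strictly monotone bijection. -/
lemma aux_linearize {n : ℕ} (r : Fin n → Fin n → Prop)
    (htrans : ∀ a b c, r a b → r b c → r a c) (hirr : ∀ a, ¬ r a a) (hn : 0 < n) :
    ∃ pos : Fin n → Fin n, Function.Bijective pos ∧ ∀ a b, r a b → pos a < pos b := by
  classical
  set r' : Fin n → Fin n → Prop := fun a b => r a b ∨ a = b with hr'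
  haveI : IsPartialOrder (Fin n) r' := by
    refine { refl := fun a => Or.inr rfl, trans := ?_, antisymm := ?_ }
    · rintro a b c (hab | rfl) (hbc | rfl)
      · exact Or.inl (htrans a b c hab hbc)
      · exact Or.inl hab
      · exact Or.inl hbc
      · exact Or.inr rfl
    · intro a b hab hba
      rcases hab with hab | rfl
      · rcases hba with hba | rfl
        · exact absurd (htrans a b a hab hba) (hirr a)
        · rfl
      · rfl
  obtain ⟨sle, hsle, hext⟩ := extend_partialOrder r'
  have hstrict : ∀ a b, sle a b → a ≠ b →
      (Finset.univ.filter (fun k => sle k a ∧ k ≠ a)).card <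
      (Finset.univ.filter (fun k => sle k b ∧ k ≠ b)).card := by
    intro a b hab hne
    apply Finset.card_lt_card
    rw [Finset.ssubset_iff_of_subset]
    · exact ⟨a, by simp [hab, hne], by simp⟩
    · intro k hk
      simp only [Finset.mem_filter, Finset.mem_univ, true_and] at hk ⊢
      refine ⟨hsle.trans k a b hk.1 hab, ?_⟩
      rintro rfl
      exact hne (hsle.antisymm a k hab hk.1)
  have hlt : ∀ a : Fin n, (Finset.univ.filter (fun k => sle k a ∧ k ≠ a)).card < n := by
    intro a
    calc (Finset.univ.filter (fun k => sle k a ∧ k ≠ a)).card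
        ≤ (Finset.univ.erase a).card := by
          apply Finset.card_le_card
          intro k hk
          simp only [Finset.mem_filter, Finset.mem_univ, true_and] at hk
          simp [Finset.mem_erase, hk.2]
      _ < n := by
          rw [Finset.card_erase_of_mem (Finset.mem_univ a)]
          simp [Finset.card_univ]
          omega
  refine ⟨fun a => ⟨_, hlt a⟩, ?_, ?_⟩
  · have hinj : Function.Injective (fun a : Fin n => (⟨_, hlt a⟩ : Fin n)) := by
      intro a b hab
      by_contra hne
      rcases hsle.total a b with h | h
      · exact absurd (congrArg Fin.val hab) (Nat.ne_of_lt (hstrict a b h hne))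
      · exact absurd (congrArg Fin.val hab).symm (Nat.ne_of_lt (hstrict b a h (Ne.symm hne)))
    exact Finite.injective_iff_bijective.1 hinj
  · intro a b hab
    have hne : a ≠ b := by rintro rfl; exact hirr a hab
    exact hstrict a b (hext a b (Or.inl hab)) hne

end Aux

/-- For a finite acyclic directed graph on vertices `Fin n` with
edge list `E` and `s t : Fin n`, the formula `φ₁ ∧ φ₂` with
`φ₁ = ◇ⁿ⊤ ∧ □ⁿ⁺¹⊥` and
`φ₂ = ↓r.@_r◇↓x₁.⋯@_r◇↓xₙ.(⋀_{(i,j)∈E} @_{x_i}◇x_j ∧ @_{x_t}◇x_s)`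
(the vertex `i` uses the state variable `i`, and `r` is the state variable `n`)
is satisfiable over the class of transitive frames iff there is a topological
ordering of the graph in which `t` appears before `s`. -/
theorem unreachability_reduction (n : ℕ) (E : List (Fin n × Fin n)) (s t : Fin n)
    (hacyc : ∀ a : Fin n, ¬ Relation.TransGen (fun a b => (a, b) ∈ E) a a) :
    SatisfiableTrans
      (HForm.and
        (HForm.and (HForm.dia^[n] HForm.top) (HForm.box^[n + 1] HForm.bot))
        (applyOps
          (HOp.bind n ::
            (List.finRange n).flatMap (fun i => [HOp.atV n, HOp.dia, HOp.bind i.val]))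
          (E.foldr
            (fun e acc => HForm.and (HForm.atV (e.1 : ℕ) (HForm.dia (HForm.svar (e.2 : ℕ)))) acc)
            (HForm.atV (t : ℕ) (HForm.dia (HForm.svar (s : ℕ))))))) ↔
      ∃ pos : Fin n → Fin n, Function.Bijective pos ∧
        (∀ e ∈ E, pos e.1 < pos e.2) ∧ pos t < pos s := by
  set ψE : HForm := E.foldr
      (fun e acc => HForm.and (HForm.atV (e.1 : ℕ) (HForm.dia (HForm.svar (e.2 : ℕ)))) acc)
      (HForm.atV (t : ℕ) (HForm.dia (HForm.svar (s : ℕ)))) with hψE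
  constructor
  · rintro ⟨W, K, hKtrans, g, w, hsat⟩
    obtain ⟨⟨hdia, hbox⟩, hφ2⟩ := hsat
    have hφ2' : Sat K (updAsg g n w) w
        (applyOps ((List.finRange n).flatMap fun i => [HOp.atV n, HOp.dia, HOp.bind i.val])
          ψE) := hφ2
    obtain ⟨g', hrel, hkeep, w'', hsatψ⟩ :=
      aux_extract K w ψE (List.finRange n) (updAsg g n w) w hφ2' (by simp [updAsg])
    obtain ⟨hE, hbase⟩ := (aux_foldr_iff K _ E g' w'').1 hsatψ
    obtain ⟨v0, hv0, hv0'⟩ := hbase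
    have hts : K.rel (g' (t : ℕ)) (g' (s : ℕ)) := hv0' ▸ hv0
    have hrel' : ∀ i : Fin n, K.rel w (g' (i : ℕ)) :=
      fun i => hrel i (List.mem_finRange i)
    have hirr : ∀ a : Fin n, ¬ K.rel (g' (a : ℕ)) (g' (a : ℕ)) :=
      fun a ha => aux_box_irrefl K n g w (g' (a : ℕ)) hbox (hrel' a) ha
    obtain ⟨pos, hbij, hmono⟩ :=
      aux_linearize (fun a b => K.rel (g' (a : ℕ)) (g' (b : ℕ)))
        (fun a b c hab hbc => hKtrans hab hbc) hirr t.pos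
    exact ⟨pos, hbij, fun e he => hmono _ _ (hE e he), hmono _ _ hts⟩
  · rintro ⟨pos, hbij, hE, hts⟩
    refine ⟨Fin (n + 1), ⟨fun a b => a < b, fun _ => ∅, fun _ => 0⟩,
      fun a b c hab hbc => lt_trans hab hbc, fun _ => 0, 0, ?_, ?_⟩
    · exact ⟨aux_dia_iter _ rfl n _ 0 (by simp),
        aux_box_iter _ rfl (n + 1) _ 0 (by simp)⟩
    · set K : Kripke (Fin (n + 1)) := ⟨fun a b => a < b, fun _ => ∅, fun _ => 0⟩ with hK
      set f : Fin n → Fin (n + 1) := fun i => (pos i).succ with hfdef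
      have hf : ∀ i, K.rel 0 (f i) := fun i => (pos i).succ_pos
      show Sat K (updAsg (fun _ => 0) n 0) 0
        (applyOps ((List.finRange n).flatMap fun i => [HOp.atV n, HOp.dia, HOp.bind i.val]) ψE)
      refine aux_build K 0 f hf ψE (List.finRange n) _ 0 (by simp [updAsg]) ?_
      intro w''
      set gfin := (List.finRange n).foldl (fun g j => updAsg g j.val (f j))
        (updAsg (fun _ => 0) n 0) with hgfin
      have hgf : ∀ i : Fin n, gfin (i : ℕ) = f i :=
        fun i => aux_foldl_mem f (List.finRange n) _ i (List.mem_finRange i)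
      refine (aux_foldr_iff K _ E gfin w'').2 ⟨?_, ?_⟩
      · intro e he
        rw [hgf e.1, hgf e.2]
        exact Fin.succ_lt_succ_iff.2 (hE e he)
      · exact ⟨gfin (s : ℕ), by rw [hgf t, hgf s]; exact Fin.succ_lt_succ_iff.2 hts, rfl⟩
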